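/- Let d ≥ 2 and let J be a 1-dependent hard-core process on the d-ray star graph S^d with marginals p. For n_i ≥ 0 and words x_i = (x_{i1},...,x_{in_i}) ∈ {0,1}^{n_i} (i = 1,...,d), write P_i(x_i) := P(J_{v_{ik}} = x_{ik} for 1 ≤ k ≤ n_i) and let x̂_i := (x_{i2},...,x_{in_i}) (with P_i(empty word) := 1). Then: (1) if x_{i1} = 1 for some i with n_i ≥ 1, then P(J_{v_0} = 0 and J_{v_{ik}} = x_{ik} for all i, k) = ∏_{i=1}^d P_i(x_i); (2) if x_{i1} = 0 whenever n_i ≥ 1, then P(J_{v_0} = 1 and J_{v_{ik}} = x_{ik} for all i, k) = p·∏_{i=1}^d P_i(x̂_i); (3) if x_{i1} = 0 whenever n_i ≥ 1, then P(J_{v_0} = 0 and J_{v_{ik}} = x_{ik} for all i, k) = ∏_{i=1}^d P_i(x_i) − p·∏_{i=1}^d P_i(x̂_i). -/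

import Mathlib

open MeasureTheory ProbabilityTheory

/-- A process `X` indexed by the vertices of a graph `G` is *1-dependent* if its
restrictions to any two vertex sets at graph distance greater than 1 (i.e. containing
no common and no adjacent vertices) are independent. -/
def OneDependent {V E Ω : Type*} [MeasurableSpace E] (G : SimpleGraph V)
    [MeasurableSpace Ω] (μ : Measure Ω) (X : V → Ω → E) : Prop :=
  ∀ A B : Set V, (∀ a ∈ A, ∀ b ∈ B, a ≠ b ∧ ¬G.Adj a b) →
    IndepFun (fun ω (a : A) => X a.1 ω) (fun ω (b : B) => X b.1 ω) μ

/-- A `{0,1}`-valued process is a *hard-core process* on `G` if almost surely no two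
adjacent vertices both take the value `1` (`true`). -/
def HardCore {V Ω : Type*} (G : SimpleGraph V) [MeasurableSpace Ω]
    (μ : Measure Ω) (J : V → Ω → Bool) : Prop :=
  ∀ u v, G.Adj u v → μ {ω | J u ω = true ∧ J v ω = true} = 0

/-- The critical point `p_h(G)`: the supremum of all `p` for which a 1-dependent
hard-core process on `G` with marginals `P(J_v = 1) = p` exists. -/
noncomputable def pCrit {V : Type*} (G : SimpleGraph V) : ℝ :=
  sSup {p : ℝ | ∃ (Ω : Type) (_ : MeasurableSpace Ω) (μ : Measure Ω),
    IsProbabilityMeasure μ ∧ ∃ J : V → Ω → Bool,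
      (∀ v, Measurable (J v)) ∧ HardCore G μ J ∧ OneDependent G μ J ∧
      ∀ v, (μ {ω | J v ω = true}).toReal = p}

/-- The `d`-ray star graph: a distinguished vertex `none`, and `d` infinite rays;
`some (i, k)` is the `(k+1)`-st vertex of ray `i`. -/
def starGraph (d : ℕ) : SimpleGraph (Option (Fin d × ℕ)) :=
  SimpleGraph.fromRel (fun u v =>
    (∃ i, u = none ∧ v = some (i, 0)) ∨ (∃ i k, u = some (i, k) ∧ v = some (i, k + 1)))

open scoped BigOperators

section Aux
variable {d : ℕ} {Ω : Type} [MeasurableSpace Ω] {μ : Measure Ω}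
  {J : Option (Fin d × ℕ) → Ω → Bool}

lemma meas_cyl (hmeas : ∀ v, Measurable (J v)) {ι : Type} [Countable ι]
    (v : ι → Option (Fin d × ℕ)) (Q : ι → Prop) (b : ι → Bool) :
    MeasurableSet {ω | ∀ j, Q j → J (v j) ω = b j} := by
  have h : {ω | ∀ j, Q j → J (v j) ω = b j}
      = ⋂ j, ⋂ _h : Q j, (J (v j)) ⁻¹' {b j} := by
    ext ω; simp
  rw [h]
  exact MeasurableSet.iInter fun j => MeasurableSet.iInter fun _ =>
    (hmeas _) (measurableSet_singleton _)

lemma meas_pi_cyl {A : Set (Option (Fin d × ℕ))} {ι : Type} [Countable ι]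
    {Q : ι → Prop} (c : ∀ j, Q j → A) (b : ι → Bool) :
    MeasurableSet {g : A → Bool | ∀ j, ∀ h : Q j, g (c j h) = b j} := by
  have h : {g : A → Bool | ∀ j, ∀ h : Q j, g (c j h) = b j}
      = ⋂ j, ⋂ h : Q j, (fun g : A → Bool => g (c j h)) ⁻¹' {b j} := by
    ext g; simp
  rw [h]
  exact MeasurableSet.iInter fun j => MeasurableSet.iInter fun h =>
    (measurable_pi_apply _) (measurableSet_singleton _)

lemma indep_cyl (hdep : OneDependent (starGraph d) μ J) (hmeas : ∀ v, Measurable (J v))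
    {A B : Set (Option (Fin d × ℕ))}
    (hAB : ∀ a ∈ A, ∀ b ∈ B, a ≠ b ∧ ¬(starGraph d).Adj a b)
    {ι κ : Type} [Countable ι] [Countable κ]
    {v : ι → Option (Fin d × ℕ)} {w : κ → Option (Fin d × ℕ)}
    {Q : ι → Prop} {R : κ → Prop}
    (hv : ∀ j, Q j → v j ∈ A) (hw : ∀ j, R j → w j ∈ B)
    (b : ι → Bool) (c : κ → Bool) :
    μ ({ω | ∀ j, Q j → J (v j) ω = b j} ∩ {ω | ∀ j, R j → J (w j) ω = c j})
      = μ {ω | ∀ j, Q j → J (v j) ω = b j} * μ {ω | ∀ j, R j → J (w j) ω = c j} := by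
  have h := (indepFun_iff_measure_inter_preimage_eq_mul.mp (hdep A B hAB))
    {g : A → Bool | ∀ j, ∀ h : Q j, g ⟨v j, hv j h⟩ = b j}
    {g : B → Bool | ∀ j, ∀ h : R j, g ⟨w j, hw j h⟩ = c j}
    (meas_pi_cyl _ _) (meas_pi_cyl _ _)
  exact h

end Aux

section Aux2
variable {d : ℕ}

lemma star_adj_none_first (i : Fin d) : (starGraph d).Adj none (some (i, 0)) := by
  rw [starGraph, SimpleGraph.fromRel_adj]
  exact ⟨by simp, Or.inl (Or.inl ⟨i, rfl, rfl⟩)⟩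

lemma star_adj_ray (i : Fin d) (k : ℕ) :
    (starGraph d).Adj (some (i, k)) (some (i, k + 1)) := by
  rw [starGraph, SimpleGraph.fromRel_adj]
  exact ⟨by simp, Or.inl (Or.inr ⟨i, k, rfl, rfl⟩)⟩

lemma star_not_adj_some {i j : Fin d} {k l : ℕ}
    (h : i ≠ j ∨ (k + 1 ≠ l ∧ l + 1 ≠ k)) :
    ¬(starGraph d).Adj (some (i, k)) (some (j, l)) := by
  rw [starGraph, SimpleGraph.fromRel_adj]
  rintro ⟨-, (⟨i', h1, h2⟩ | ⟨i', k', h1, h2⟩) | (⟨i', h1, h2⟩ | ⟨i', k', h1, h2⟩)⟩ <;>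
    simp only [Option.some.injEq, Prod.mk.injEq, reduceCtorEq] at h1 h2 <;>
    obtain ⟨rfl, rfl⟩ := h1 <;> obtain ⟨rfl, rfl⟩ := h2 <;>
    rcases h with h | ⟨h1, h2⟩ <;> simp_all

lemma star_not_adj_none_some {i : Fin d} {k : ℕ} (h : k ≠ 0) :
    ¬(starGraph d).Adj none (some (i, k)) := by
  rw [starGraph, SimpleGraph.fromRel_adj]
  rintro ⟨-, (⟨i', h1, h2⟩ | ⟨i', k', h1, h2⟩) | (⟨i', h1, h2⟩ | ⟨i', k', h1, h2⟩)⟩ <;>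
    simp_all

lemma sep_ray_rays (i₀ : Fin d) :
    ∀ a ∈ {v : Option (Fin d × ℕ) | ∃ k, v = some (i₀, k)},
    ∀ b ∈ {v : Option (Fin d × ℕ) | ∃ j k, v = some (j, k) ∧ j ≠ i₀},
    a ≠ b ∧ ¬(starGraph d).Adj a b := by
  rintro a ⟨k, rfl⟩ b ⟨j, l, rfl, hj⟩
  refine ⟨?_, star_not_adj_some (Or.inl (fun h => hj h.symm))⟩
  simp only [ne_eq, Option.some.injEq, Prod.mk.injEq, not_and]
  rintro rfl
  exact absurd rfl hj

lemma sep_none_tails :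
    ∀ a ∈ {v : Option (Fin d × ℕ) | v = none},
    ∀ b ∈ {v : Option (Fin d × ℕ) | ∃ j k, v = some (j, k) ∧ 1 ≤ k},
    a ≠ b ∧ ¬(starGraph d).Adj a b := by
  rintro a rfl b ⟨j, l, rfl, hl⟩
  exact ⟨by simp, star_not_adj_none_some (by omega)⟩

lemma sep_pt_far (i : Fin d) (m : ℕ) :
    ∀ a ∈ {v : Option (Fin d × ℕ) | v = some (i, m)},
    ∀ b ∈ {v : Option (Fin d × ℕ) | ∃ k, m + 2 ≤ k ∧ v = some (i, k)},
    a ≠ b ∧ ¬(starGraph d).Adj a b := by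
  rintro a rfl b ⟨l, hl, rfl⟩
  refine ⟨?_, star_not_adj_some (Or.inr ⟨by omega, by omega⟩)⟩
  simp only [ne_eq, Option.some.injEq, Prod.mk.injEq, not_and]
  omega

end Aux2

section Aux3
variable {Ω : Type} [MeasurableSpace Ω] {μ : Measure Ω}

lemma measure_eq_of_null_diff {E F : Set Ω} (hsub : E ⊆ F) (hnull : μ (F \ E) = 0) :
    μ E = μ F := by
  refine le_antisymm (measure_mono hsub) ?_
  calc μ F ≤ μ (E ∪ F \ E) := measure_mono (fun ω hω => by
        by_cases h : ω ∈ E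
        · exact Or.inl h
        · exact Or.inr ⟨hω, h⟩)
    _ ≤ μ E + μ (F \ E) := measure_union_le _ _
    _ = μ E := by rw [hnull, add_zero]

end Aux3

section Ray
variable {d : ℕ} {Ω : Type} [MeasurableSpace Ω] {μ : Measure Ω}
  {J : Option (Fin d × ℕ) → Ω → Bool}

/-- Cylinder event along ray `i`, starting at position `m`, of length `L`. -/
def rayCyl (J : Option (Fin d × ℕ) → Ω → Bool) (i : Fin d) (m L : ℕ) (y : ℕ → Bool) :
    Set Ω :=
  {ω | ∀ k, k < L → J (some (i, m + k)) ω = y k}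

lemma rayCyl_zero (i : Fin d) (m : ℕ) (y : ℕ → Bool) :
    rayCyl J i m 0 y = Set.univ := by
  ext ω; simp [rayCyl]

lemma rayCyl_one (i : Fin d) (m : ℕ) (y : ℕ → Bool) :
    rayCyl J i m 1 y = {ω | J (some (i, m)) ω = y 0} := by
  ext ω
  simp only [rayCyl, Set.mem_setOf_eq, Nat.lt_one_iff]
  constructor
  · intro h; have := h 0 rfl; simpa using this
  · rintro h k rfl; simpa using h

/-- start-true, second-true: null. -/
lemma rayCyl_tt (hhc : HardCore (starGraph d) μ J) {i : Fin d} {m L : ℕ} {y : ℕ → Bool}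
    (hL : 2 ≤ L) (h0 : y 0 = true) (h1 : y 1 = true) :
    μ (rayCyl J i m L y) = 0 := by
  refine measure_mono_null (fun ω hω => ?_) (hhc (some (i, m)) (some (i, m + 1)) (star_adj_ray i m))
  have e0 := hω 0 (by omega)
  have e1 := hω 1 (by omega)
  rw [h0] at e0; rw [h1] at e1
  simpa using ⟨e0, e1⟩

/-- start-true, second-false: factorizes. -/
lemma rayCyl_tf (hhc : HardCore (starGraph d) μ J) (hdep : OneDependent (starGraph d) μ J)
    (hmeas : ∀ v, Measurable (J v))
    {i : Fin d} {m L : ℕ} {y : ℕ → Bool}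
    (hL : 2 ≤ L) (h0 : y 0 = true) (h1 : y 1 = false) :
    μ (rayCyl J i m L y)
      = μ {ω | J (some (i, m)) ω = true} * μ (rayCyl J i (m + 2) (L - 2) (fun k => y (k + 2))) := by
  -- Step 1: a.e. replace the cylinder by the event dropping coordinates 0 and 1.
  have hstep : μ (rayCyl J i m L y)
      = μ ({ω | ∀ j : ℕ, j = 0 → J (some (i, m)) ω = true}
           ∩ {ω | ∀ k : ℕ, (2 ≤ k ∧ k < L) → J (some (i, m + k)) ω = y k}) := by
    refine measure_eq_of_null_diff ?_ (measure_mono_null ?_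
      (hhc (some (i, m)) (some (i, m + 1)) (star_adj_ray i m)))
    · rintro ω hω
      refine ⟨fun j hj => ?_, fun k hk => hω k hk.2⟩
      have := hω 0 (by omega); rw [h0] at this; simpa using this
    · rintro ω ⟨⟨h2, h3⟩, h4⟩
      have hm : J (some (i, m)) ω = true := h2 0 rfl
      refine ⟨hm, ?_⟩
      simp only [rayCyl, Set.mem_setOf_eq] at h4
      push_neg at h4
      obtain ⟨k, hk, hne⟩ := h4
      have hk1 : k = 1 := by
        rcases Nat.lt_or_ge k 2 with h | h
        · interval_cases k
          · exfalso; apply hne; rw [h0]; simpa using hm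
          · rfl
        · exact absurd (h3 k ⟨h, hk⟩) hne
      subst hk1
      rw [h1] at hne
      simpa using hne
  rw [hstep]
  -- Step 2: independence of the point and the far tail.
  have hind := indep_cyl (μ := μ) hdep hmeas (sep_pt_far i m)
    (v := fun _ : ℕ => some (i, m)) (w := fun k : ℕ => some (i, m + k))
    (Q := fun j => j = 0) (R := fun k => 2 ≤ k ∧ k < L)
    (fun j _ => rfl) (fun k hk => ⟨m + k, by omega, rfl⟩)
    (fun _ => true) y
  have e1 : {ω | ∀ j : ℕ, j = 0 → J (some (i, m)) ω = true}
      = {ω | J (some (i, m)) ω = true} := by ext ω; simp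
  have e2 : {ω | ∀ k : ℕ, (2 ≤ k ∧ k < L) → J (some (i, m + k)) ω = y k}
      = rayCyl J i (m + 2) (L - 2) (fun k => y (k + 2)) := by
    ext ω
    simp only [Set.mem_setOf_eq, rayCyl]
    constructor
    · intro h k hk
      have := h (k + 2) ⟨by omega, by omega⟩
      have e : m + (k + 2) = m + 2 + k := by omega
      rwa [e] at this
    · rintro h k ⟨hk2, hkL⟩
      have := h (k - 2) (by omega)
      have e : m + 2 + (k - 2) = m + k := by omega
      have e2 : k - 2 + 2 = k := by omega
      rwa [e, e2] at this
  rw [hind, e1, e2]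

/-- start-false: decomposition of the shifted cylinder. -/
lemma rayCyl_split (hmeas : ∀ v, Measurable (J v))
    {i : Fin d} {m L : ℕ} {y : ℕ → Bool} (hL : 1 ≤ L) (h0 : y 0 = false) :
    μ (rayCyl J i (m + 1) (L - 1) (fun k => y (k + 1)))
      = μ (rayCyl J i m L y)
        + μ (rayCyl J i m L (fun k => if k = 0 then true else y k)) := by
  have hs : MeasurableSet {ω | J (some (i, m)) ω = true} :=
    (hmeas _) (measurableSet_singleton _)
  have key := measure_inter_add_diff (μ := μ)
    (rayCyl J i (m + 1) (L - 1) (fun k => y (k + 1))) hs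
  have e1 : rayCyl J i (m + 1) (L - 1) (fun k => y (k + 1)) ∩ {ω | J (some (i, m)) ω = true}
      = rayCyl J i m L (fun k => if k = 0 then true else y k) := by
    ext ω
    simp only [rayCyl, Set.mem_inter_iff, Set.mem_setOf_eq]
    constructor
    · rintro ⟨h, hm⟩ k hk
      rcases k with _ | k'
      · simpa using hm
      · have := h k' (by omega)
        have e : m + 1 + k' = m + (k' + 1) := by omega
        rw [e] at this
        simpa using this
    · intro h
      constructor
      · intro k hk
        have := h (k + 1) (by omega)
        have e : m + (k + 1) = m + 1 + k := by omega
        rw [e] at this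
        simpa using this
      · have := h 0 (by omega)
        simpa using this
  have e2 : rayCyl J i (m + 1) (L - 1) (fun k => y (k + 1)) \ {ω | J (some (i, m)) ω = true}
      = rayCyl J i m L y := by
    ext ω
    simp only [rayCyl, Set.mem_diff, Set.mem_setOf_eq]
    constructor
    · rintro ⟨h, hm⟩ k hk
      rcases k with _ | k'
      · simp only [Nat.add_zero]
        rw [h0]
        exact Bool.not_eq_true _ ▸ (by simpa using Bool.eq_false_iff.mpr (by simpa using hm))
      · have := h k' (by omega)
        have e : m + 1 + k' = m + (k' + 1) := by omega
        rw [e] at this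
        exact this
    · intro h
      constructor
      · intro k hk
        have := h (k + 1) (by omega)
        have e : m + (k + 1) = m + 1 + k := by omega
        rw [e] at this
        exact this
      · have := h 0 (by omega)
        simp only [Nat.add_zero, h0] at this
        simp [this]
  rw [e1, e2] at key
  rw [← key, add_comm]

/-- Shift invariance of ray cylinder probabilities. -/
lemma rayCyl_shift [IsProbabilityMeasure μ] (hhc : HardCore (starGraph d) μ J) (hdep : OneDependent (starGraph d) μ J)
    (hmeas : ∀ v, Measurable (J v))
    (hmargc : ∀ v w, μ {ω | J v ω = true} = μ {ω | J w ω = true}) (i : Fin d) :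
    ∀ L (y : ℕ → Bool) (m m' : ℕ), μ (rayCyl J i m L y) = μ (rayCyl J i m' L y) := by
  intro L
  induction L using Nat.strong_induction_on with
  | _ L IH =>
  intro y m m'
  rcases Nat.eq_zero_or_pos L with rfl | hL
  · rw [rayCyl_zero, rayCyl_zero]
  have htrue : ∀ z : ℕ → Bool, z 0 = true →
      μ (rayCyl J i m L z) = μ (rayCyl J i m' L z) := by
    intro z hz
    rcases eq_or_lt_of_le (Nat.succ_le_of_lt hL) with hL1 | hL2
    · have : L = 1 := hL1.symm
      subst this
      rw [rayCyl_one, rayCyl_one, hz]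
      exact hmargc _ _
    · have hL2' : 2 ≤ L := hL2
      cases hz1 : z 1 with
      | true => rw [rayCyl_tt hhc hL2' hz hz1, rayCyl_tt hhc hL2' hz hz1]
      | false =>
        rw [rayCyl_tf hhc hdep hmeas hL2' hz hz1, rayCyl_tf hhc hdep hmeas hL2' hz hz1,
          hmargc (some (i, m)) (some (i, m')), IH (L - 2) (by omega) _ (m + 2) (m' + 2)]
  cases hy0 : y 0 with
  | true => exact htrue y hy0
  | false =>
    have e1 := rayCyl_split (μ := μ) hmeas (i := i) (m := m) hL hy0
    have e2 := rayCyl_split (μ := μ) hmeas (i := i) (m := m') hL hy0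
    have hY := IH (L - 1) (by omega) (fun k => y (k + 1)) (m + 1) (m' + 1)
    have hT := htrue (fun k => if k = 0 then true else y k) (by simp)
    have hfin : μ (rayCyl J i m' L (fun k => if k = 0 then true else y k)) ≠ ⊤ :=
      measure_ne_top μ _
    apply WithTop.add_right_cancel hfin
    calc μ (rayCyl J i m L y) + μ (rayCyl J i m' L (fun k => if k = 0 then true else y k))
        = μ (rayCyl J i m L y) + μ (rayCyl J i m L (fun k => if k = 0 then true else y k)) := by
          rw [hT]
      _ = μ (rayCyl J i (m + 1) (L - 1) (fun k => y (k + 1))) := e1.symm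
      _ = μ (rayCyl J i (m' + 1) (L - 1) (fun k => y (k + 1))) := hY
      _ = μ (rayCyl J i m' L y) + μ (rayCyl J i m' L (fun k => if k = 0 then true else y k)) := e2

end Ray

section Rays
variable {d : ℕ} {Ω : Type} [MeasurableSpace Ω] {μ : Measure Ω}
  {J : Option (Fin d × ℕ) → Ω → Bool}

lemma rays_factor [IsProbabilityMeasure μ]
    (hdep : OneDependent (starGraph d) μ J) (hmeas : ∀ v, Measurable (J v))
    (Q : Fin d → ℕ → Prop) (b : Fin d → ℕ → Bool) :
    ∀ S : Finset (Fin d),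
      μ {ω | ∀ i ∈ S, ∀ k, Q i k → J (some (i, k)) ω = b i k}
        = ∏ i ∈ S, μ {ω | ∀ k, Q i k → J (some (i, k)) ω = b i k} := by
  intro S
  induction S using Finset.induction_on with
  | empty =>
    have : {ω : Ω | ∀ i ∈ (∅ : Finset (Fin d)), ∀ k, Q i k → J (some (i, k)) ω = b i k}
        = Set.univ := by ext ω; simp
    rw [this]
    simp
  | @insert a S ha IH =>
    have hsplit : {ω : Ω | ∀ i ∈ insert a S, ∀ k, Q i k → J (some (i, k)) ω = b i k}
        = {ω | ∀ k, Q a k → J (some (a, k)) ω = b a k}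
          ∩ {ω | ∀ j : Fin d × ℕ, (j.1 ∈ S ∧ Q j.1 j.2) → J (some (j.1, j.2)) ω = b j.1 j.2} := by
      ext ω
      simp only [Set.mem_inter_iff, Set.mem_setOf_eq, Finset.mem_insert]
      constructor
      · intro h
        exact ⟨fun k hk => h a (Or.inl rfl) k hk,
          fun j hj => h j.1 (Or.inr hj.1) j.2 hj.2⟩
      · rintro ⟨h1, h2⟩ i (rfl | hi) k hk
        · exact h1 k hk
        · exact h2 (i, k) ⟨hi, hk⟩
    have hrest : {ω : Ω | ∀ j : Fin d × ℕ, (j.1 ∈ S ∧ Q j.1 j.2) → J (some (j.1, j.2)) ω = b j.1 j.2}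
        = {ω | ∀ i ∈ S, ∀ k, Q i k → J (some (i, k)) ω = b i k} := by
      ext ω
      simp only [Set.mem_setOf_eq]
      constructor
      · intro h i hi k hk
        exact h (i, k) ⟨hi, hk⟩
      · intro h j hj
        exact h j.1 hj.1 j.2 hj.2
    have hind := indep_cyl (μ := μ) hdep hmeas (sep_ray_rays a)
      (v := fun k : ℕ => some (a, k)) (w := fun j : Fin d × ℕ => some (j.1, j.2))
      (Q := Q a) (R := fun j => j.1 ∈ S ∧ Q j.1 j.2)
      (fun k _ => ⟨k, rfl⟩)
      (fun j hj => ⟨j.1, j.2, rfl, fun h => ha (h ▸ hj.1)⟩)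
      (b a) (fun j => b j.1 j.2)
    rw [hsplit, hind, hrest, IH, Finset.prod_insert ha]



/-- Cylinder probabilities of a 1-dependent hard-core process on the
`d`-ray star graph factorize as stated: with rays carrying the words
`x i 0, …, x i (n i - 1)` and `P_i`, `P̂_i` the corresponding ray probabilities
(`P̂_i` for the word with its first letter deleted), the probability of the full
cylinder is `∏ P_i` when some ray starts with a `1`, and equals `p ∏ P̂_i`
(resp. `∏ P_i - p ∏ P̂_i`) when all rays start with `0` and the center is `1`
(resp. `0`). -/
theorem cylinder_factorization (d : ℕ) (hd : 2 ≤ d) (p : ℝ)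
    (Ω : Type) [MeasurableSpace Ω] (μ : Measure Ω) [IsProbabilityMeasure μ]
    (J : Option (Fin d × ℕ) → Ω → Bool) (hmeas : ∀ v, Measurable (J v))
    (hhc : HardCore (starGraph d) μ J) (hdep : OneDependent (starGraph d) μ J)
    (hmarg : ∀ v, (μ {ω | J v ω = true}).toReal = p)
    (n : Fin d → ℕ) (x : Fin d → ℕ → Bool) :
    ((∃ i, 1 ≤ n i ∧ x i 0 = true) →
      (μ {ω | J none ω = false ∧ ∀ i, ∀ k < n i, J (some (i, k)) ω = x i k}).toReal
        = ∏ i : Fin d, (μ {ω | ∀ k < n i, J (some (i, k)) ω = x i k}).toReal) ∧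
    ((∀ i, 1 ≤ n i → x i 0 = false) →
      (μ {ω | J none ω = true ∧ ∀ i, ∀ k < n i, J (some (i, k)) ω = x i k}).toReal
        = p * ∏ i : Fin d,
            (μ {ω | ∀ k, k + 1 < n i → J (some (i, k)) ω = x i (k + 1)}).toReal) ∧
    ((∀ i, 1 ≤ n i → x i 0 = false) →
      (μ {ω | J none ω = false ∧ ∀ i, ∀ k < n i, J (some (i, k)) ω = x i k}).toReal
        = (∏ i : Fin d, (μ {ω | ∀ k < n i, J (some (i, k)) ω = x i k}).toReal)
          - p * ∏ i : Fin d,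
              (μ {ω | ∀ k, k + 1 < n i → J (some (i, k)) ω = x i (k + 1)}).toReal) := by
  classical
  have hmargc : ∀ v w : Option (Fin d × ℕ), μ {ω | J v ω = true} = μ {ω | J w ω = true} := by
    intro v w
    exact (ENNReal.toReal_eq_toReal_iff' (measure_ne_top μ _) (measure_ne_top μ _)).mp
      ((hmarg v).trans (hmarg w).symm)
  have hCtmeas : MeasurableSet {ω | J none ω = true} :=
    (hmeas none) (measurableSet_singleton _)
  -- factorization of the full ray event
  have hA : μ {ω | ∀ i, ∀ k < n i, J (some (i, k)) ω = x i k}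
      = ∏ i : Fin d, μ {ω | ∀ k < n i, J (some (i, k)) ω = x i k} := by
    have e : {ω : Ω | ∀ i, ∀ k < n i, J (some (i, k)) ω = x i k}
        = {ω | ∀ i ∈ Finset.univ, ∀ k, k < n i → J (some (i, k)) ω = x i k} := by
      ext ω; simp
    rw [e, rays_factor hdep hmeas (fun i k => k < n i) x Finset.univ]
  -- shift invariance for the tails
  have hTi : ∀ i : Fin d,
      μ {ω | ∀ k, (1 ≤ k ∧ k < n i) → J (some (i, k)) ω = x i k}
        = μ {ω | ∀ k, k + 1 < n i → J (some (i, k)) ω = x i (k + 1)} := by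
    intro i
    have e1 : {ω : Ω | ∀ k, (1 ≤ k ∧ k < n i) → J (some (i, k)) ω = x i k}
        = rayCyl J i 1 (n i - 1) (fun k => x i (k + 1)) := by
      ext ω
      simp only [rayCyl, Set.mem_setOf_eq]
      constructor
      · intro h k hk
        have := h (k + 1) ⟨by omega, by omega⟩
        rw [Nat.add_comm 1 k]
        exact this
      · rintro h k ⟨hk1, hk2⟩
        have := h (k - 1) (by omega)
        have e : 1 + (k - 1) = k := by omega
        have e' : k - 1 + 1 = k := by omega
        rw [e, e'] at this
        exact this
    have e2 : {ω : Ω | ∀ k, k + 1 < n i → J (some (i, k)) ω = x i (k + 1)}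
        = rayCyl J i 0 (n i - 1) (fun k => x i (k + 1)) := by
      ext ω
      simp only [rayCyl, Set.mem_setOf_eq]
      constructor
      · intro h k hk
        have := h k (by omega)
        rwa [Nat.zero_add]
      · intro h k hk
        have := h k (by omega)
        rwa [Nat.zero_add] at this
    rw [e1, e2]
    exact rayCyl_shift hhc hdep hmeas hmargc i (n i - 1) _ 1 0
  -- center ⟂ tails, and tails factorize
  have hB : μ ({ω | J none ω = true}
        ∩ {ω | ∀ j : Fin d × ℕ, (1 ≤ j.2 ∧ j.2 < n j.1) → J (some (j.1, j.2)) ω = x j.1 j.2})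
      = μ {ω | J none ω = true}
        * ∏ i : Fin d, μ {ω | ∀ k, k + 1 < n i → J (some (i, k)) ω = x i (k + 1)} := by
    have hind := indep_cyl (μ := μ) hdep hmeas sep_none_tails
      (v := fun _ : ℕ => (none : Option (Fin d × ℕ))) (w := fun j : Fin d × ℕ => some (j.1, j.2))
      (Q := fun j : ℕ => j = 0) (R := fun j : Fin d × ℕ => 1 ≤ j.2 ∧ j.2 < n j.1)
      (fun _ _ => rfl) (fun j hj => ⟨j.1, j.2, rfl, hj.1⟩)
      (fun _ => true) (fun j => x j.1 j.2)
    have ec : {ω : Ω | ∀ j : ℕ, j = 0 → J none ω = true} = {ω | J none ω = true} := by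
      ext ω; simp
    rw [ec] at hind
    rw [hind]
    congr 1
    have e : {ω : Ω | ∀ j : Fin d × ℕ, (1 ≤ j.2 ∧ j.2 < n j.1) → J (some (j.1, j.2)) ω = x j.1 j.2}
        = {ω | ∀ i ∈ Finset.univ, ∀ k, (1 ≤ k ∧ k < n i) → J (some (i, k)) ω = x i k} := by
      ext ω
      constructor
      · intro h i _ k hk; exact h (i, k) hk
      · intro h j hj; exact h j.1 (Finset.mem_univ _) j.2 hj
    rw [e, rays_factor hdep hmeas (fun i k => 1 ≤ k ∧ k < n i) x Finset.univ]
    exact Finset.prod_congr rfl fun i _ => hTi i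
  -- partition by the value at the center
  have hsplitR : μ {ω | ∀ i, ∀ k < n i, J (some (i, k)) ω = x i k}
      = μ ({ω | J none ω = true} ∩ {ω | ∀ i, ∀ k < n i, J (some (i, k)) ω = x i k})
        + μ ({ω | J none ω = false} ∩ {ω | ∀ i, ∀ k < n i, J (some (i, k)) ω = x i k}) := by
    have key := measure_inter_add_diff (μ := μ)
      {ω | ∀ i, ∀ k < n i, J (some (i, k)) ω = x i k} hCtmeas
    have ed : {ω | ∀ i, ∀ k < n i, J (some (i, k)) ω = x i k} \ {ω | J none ω = true}
        = {ω | J none ω = false} ∩ {ω | ∀ i, ∀ k < n i, J (some (i, k)) ω = x i k} := by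
      ext ω
      simp only [Set.mem_diff, Set.mem_inter_iff, Set.mem_setOf_eq, Bool.not_eq_true]
      tauto
    rw [ed] at key
    rw [← key, Set.inter_comm]
  -- the hard-core a.e. identification when all rays start with 0
  have hae : (∀ i, 1 ≤ n i → x i 0 = false) →
      μ ({ω | J none ω = true} ∩ {ω | ∀ i, ∀ k < n i, J (some (i, k)) ω = x i k})
      = μ ({ω | J none ω = true}
        ∩ {ω | ∀ j : Fin d × ℕ, (1 ≤ j.2 ∧ j.2 < n j.1) → J (some (j.1, j.2)) ω = x j.1 j.2}) := by
    intro h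
    refine measure_eq_of_null_diff ?_ (measure_mono_null ?_
      (measure_iUnion_null fun i : Fin d =>
        hhc none (some (i, 0)) (star_adj_none_first i)))
    · rintro ω ⟨h1, h2⟩
      exact ⟨h1, fun j hj => h2 j.1 j.2 hj.2⟩
    · rintro ω ⟨⟨h1, h2⟩, h3⟩
      have hno : ¬ ∀ i, ∀ k < n i, J (some (i, k)) ω = x i k := fun hc => h3 ⟨h1, hc⟩
      push_neg at hno
      obtain ⟨i, k, hk, hne⟩ := hno
      have hk0 : k = 0 := by
        by_contra hk0
        exact hne (h2 (i, k) ⟨by omega, hk⟩)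
      subst hk0
      refine Set.mem_iUnion.mpr ⟨i, h1, ?_⟩
      have hxi := h i hk
      rw [hxi] at hne
      cases hb : J (some (i, 0)) ω
      · exact absurd hb hne
      · rfl
  -- main statement (2) in intersection form
  have main2 : (∀ i, 1 ≤ n i → x i 0 = false) →
      (μ ({ω | J none ω = true} ∩ {ω | ∀ i, ∀ k < n i, J (some (i, k)) ω = x i k})).toReal
        = p * ∏ i : Fin d,
            (μ {ω | ∀ k, k + 1 < n i → J (some (i, k)) ω = x i (k + 1)}).toReal := by
    intro h
    rw [hae h, hB, ENNReal.toReal_mul, hmarg none, ENNReal.toReal_prod]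
  refine ⟨?_, ?_, ?_⟩
  · rintro ⟨i₀, hn, hx⟩
    have hzero : μ ({ω | J none ω = true}
        ∩ {ω | ∀ i, ∀ k < n i, J (some (i, k)) ω = x i k}) = 0 := by
      refine measure_mono_null ?_ (hhc none (some (i₀, 0)) (star_adj_none_first i₀))
      rintro ω ⟨h1, h2⟩
      refine ⟨h1, ?_⟩
      rw [← hx]
      exact h2 i₀ 0 hn
    rw [hzero, zero_add] at hsplitR
    rw [Set.setOf_and, ← hsplitR, hA, ENNReal.toReal_prod]
  · intro h
    rw [Set.setOf_and]
    exact main2 h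
  · intro h
    have hsum := congrArg ENNReal.toReal hsplitR
    rw [ENNReal.toReal_add (measure_ne_top μ _) (measure_ne_top μ _)] at hsum
    rw [Set.setOf_and]
    have h2 := main2 h
    have hAr := congrArg ENNReal.toReal hA
    rw [ENNReal.toReal_prod] at hAr
    rw [← hAr]
    rw [hsum, h2]
    ring
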